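/- Let r ∈ ℝ_{≥0}^K satisfy, for every subset S containing k, the existence of S̃ ⊆ S with k ∈ S̃ and ∑_{i∈S̃} r_i < I(S̃, S^c), where I(A,B) = I(X_{i∈A}; Y | X_{i∈B}) for independent inputs. If additionally the same holds for every k ∈ S₀ for some subset S₀, then r satisfies: for every S with S ∩ S₀ ≠ ∅ there exists S̃ with S ∩ S₀ ⊆ S̃ ⊆ S and ∑_{i∈S̃} r_i < I(S̃, S^c). -/
import Mathlib


open Finset

/-- Theorem 4 region identity (nontrivial inclusion `⋂_{k∈S₀} R_k ⊆ R_{S₀}`):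
`I A B` abstracts `I(X_{i∈A}; Y | X_{i∈B})` for independent inputs and
satisfies the chain rule.  If for every `k ∈ S₀` and every `S ∋ k` there is
`T ⊆ S` with `k ∈ T` and `∑_{i∈T} r_i < I T Sᶜ`, then for every `S` meeting
`S₀` there is `T` with `S ∩ S₀ ⊆ T ⊆ S` and `∑_{i∈T} r_i < I T Sᶜ`. -/
theorem stmt_14 (K : ℕ) (r : Fin K → ℝ) (hr : ∀ i, 0 ≤ r i)
    (I : Finset (Fin K) → Finset (Fin K) → ℝ)
    (hchain : ∀ A B C : Finset (Fin K), Disjoint A B → Disjoint A C →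
      Disjoint B C → I (A ∪ B) C = I A (B ∪ C) + I B C)
    (S₀ : Finset (Fin K))
    (hk : ∀ k ∈ S₀, ∀ S : Finset (Fin K), k ∈ S →
      ∃ T ⊆ S, k ∈ T ∧ ∑ i ∈ T, r i < I T Sᶜ) :
    ∀ S : Finset (Fin K), (S ∩ S₀).Nonempty →
      ∃ T : Finset (Fin K), S ∩ S₀ ⊆ T ∧ T ⊆ S ∧ ∑ i ∈ T, r i < I T Sᶜ := by
  suffices H : ∀ n : ℕ, ∀ S : Finset (Fin K), (S ∩ S₀).card ≤ n → (S ∩ S₀).Nonempty →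
      ∃ T : Finset (Fin K), S ∩ S₀ ⊆ T ∧ T ⊆ S ∧ ∑ i ∈ T, r i < I T Sᶜ by
    intro S hS
    exact H (S ∩ S₀).card S le_rfl hS
  intro n
  induction n with
  | zero =>
    intro S hcard hS
    rw [Nat.le_zero, Finset.card_eq_zero] at hcard
    simp [hcard] at hS
  | succ n ih =>
    intro S hcard hS
    obtain ⟨k, hk₁⟩ := hS
    have hkS : k ∈ S := (Finset.mem_inter.mp hk₁).1
    have hkS₀ : k ∈ S₀ := (Finset.mem_inter.mp hk₁).2
    obtain ⟨T₁, hT₁S, hkT₁, hsum₁⟩ := hk k hkS₀ S hkS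
    by_cases hcover : S ∩ S₀ ⊆ T₁
    · exact ⟨T₁, hcover, hT₁S, hsum₁⟩
    · set S' := S \ T₁ with hS'
      have hne : (S' ∩ S₀).Nonempty := by
        obtain ⟨j, hj, hjT⟩ := Finset.not_subset.mp hcover
        refine ⟨j, ?_⟩
        simp only [hS', Finset.mem_inter, Finset.mem_sdiff]
        exact ⟨⟨(Finset.mem_inter.mp hj).1, hjT⟩, (Finset.mem_inter.mp hj).2⟩
      have hcard' : (S' ∩ S₀).card ≤ n := by
        have hsub : S' ∩ S₀ ⊆ (S ∩ S₀).erase k := by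
          refine Finset.subset_erase.mpr ⟨Finset.inter_subset_inter Finset.sdiff_subset le_rfl, ?_⟩
          simp [hS', hkT₁]
        have h1 := Finset.card_le_card hsub
        have h2 := Finset.card_erase_of_mem hk₁
        omega
      obtain ⟨T₂, hT₂sub, hT₂S', hsum₂⟩ := ih S' hcard' hne
      have hT₂S : T₂ ⊆ S := hT₂S'.trans Finset.sdiff_subset
      have hd21 : Disjoint T₂ T₁ := by
        refine Finset.disjoint_left.mpr fun a ha ha1 => ?_
        exact (Finset.mem_sdiff.mp (hT₂S' ha)).2 ha1
      have hd2c : Disjoint T₂ Sᶜ := by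
        refine Finset.disjoint_left.mpr fun a ha hac => ?_
        exact (Finset.mem_compl.mp hac) (hT₂S ha)
      have hd1c : Disjoint T₁ Sᶜ := by
        refine Finset.disjoint_left.mpr fun a ha hac => ?_
        exact (Finset.mem_compl.mp hac) (hT₁S ha)
      have hcompl : S'ᶜ = T₁ ∪ Sᶜ := by
        ext a
        simp only [hS', Finset.mem_compl, Finset.mem_sdiff, Finset.mem_union, not_and, not_not]
        constructor
        · intro h
          by_cases haS : a ∈ S
          · exact Or.inl (h haS)
          · exact Or.inr haS
        · intro h haS
          rcases h with h | h
          · exact h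
          · exact absurd haS h
      refine ⟨T₂ ∪ T₁, ?_, Finset.union_subset hT₂S hT₁S, ?_⟩
      · intro a ha
        by_cases ha1 : a ∈ T₁
        · exact Finset.mem_union_right _ ha1
        · refine Finset.mem_union_left _ (hT₂sub ?_)
          simp only [hS', Finset.mem_inter, Finset.mem_sdiff]
          exact ⟨⟨(Finset.mem_inter.mp ha).1, ha1⟩, (Finset.mem_inter.mp ha).2⟩
      · rw [hchain T₂ T₁ Sᶜ hd21 hd2c hd1c, Finset.sum_union hd21, ← hcompl]
        exact add_lt_add hsum₂ hsum₁
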